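/- Every independent set of vertices of the symplectic graph Sp(2ν,q) (a set of vertices no two of which are adjacent) has at most (q^ν - 1)/(q - 1) elements. -/

import Mathlib

open Matrix

/-- The standard nonsingular alternate matrix over `F` with `ν` diagonal blocks
`[[0,1],[-1,0]]`. -/
def sK (F : Type) [Field F] (ν : ℕ) : Matrix (Fin (2 * ν)) (Fin (2 * ν)) F :=
  Matrix.of fun i j =>
    if i.val % 2 = 0 ∧ j.val = i.val + 1 then (1 : F)
    else if j.val % 2 = 0 ∧ i.val = j.val + 1 then (-1 : F) else 0

-- basic entry lemmas
lemma sK_skew (F : Type) [Field F] (ν : ℕ) (i j : Fin (2*ν)) :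
    sK F ν j i = - sK F ν i j := by
  simp only [sK, Matrix.of_apply]
  split_ifs with h1 h2 h3 h4 h5 <;> first | omega | ring

lemma sK_diag (F : Type) [Field F] (ν : ℕ) (i : Fin (2*ν)) : sK F ν i i = 0 := by
  simp only [sK, Matrix.of_apply]
  split_ifs with h1 h2 <;> first | omega | rfl

noncomputable def sB (F : Type) [Field F] (ν : ℕ) :
    LinearMap.BilinForm F (Fin (2*ν) → F) := Matrix.toLinearMap₂' F (sK F ν)

lemma sB_apply (F : Type) [Field F] (ν : ℕ) (x y : Fin (2*ν) → F) :
    sB F ν x y = x ⬝ᵥ ((sK F ν) *ᵥ y) := Matrix.toLinearMap₂'_apply' _ _ _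

lemma sB_alt (F : Type) [Field F] (ν : ℕ) : (sB F ν).IsAlt := by
  intro x
  rw [sB, Matrix.toLinearMap₂'_apply, ← Finset.sum_product']
  refine Finset.sum_ninvolution (fun p => (p.2, p.1)) ?_ ?_ (fun _ => Finset.mem_univ _)
    (fun _ => rfl)
  · rintro ⟨i, j⟩
    simp only [smul_eq_mul]
    rw [sK_skew]
    ring
  · rintro ⟨i, j⟩ h
    simp only [smul_eq_mul] at h
    intro hc
    obtain ⟨h1, h2⟩ := Prod.mk.injEq .. ▸ hc
    apply h
    simp only [Prod.mk.injEq] at hc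
    obtain ⟨rfl, -⟩ := hc
    rw [sK_diag]
    ring

def pIdx {ν : ℕ} (i : Fin (2*ν)) : Fin (2*ν) :=
  ⟨if i.val % 2 = 0 then i.val + 1 else i.val - 1, by
    rcases i with ⟨i, hi⟩; dsimp only; split <;> omega⟩

lemma sK_pIdx_ne (F : Type) [Field F] (ν : ℕ) (i b : Fin (2*ν)) (hb : b ≠ i) :
    sK F ν b (pIdx i) = 0 := by
  rcases i with ⟨i, hi⟩; rcases b with ⟨b, hbv⟩
  have hbi : b ≠ i := by simpa [Fin.ext_iff] using hb
  simp only [sK, pIdx, Matrix.of_apply]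
  split_ifs <;> first | omega | rfl

lemma sK_pIdx_self (F : Type) [Field F] (ν : ℕ) (i : Fin (2*ν)) :
    sK F ν i (pIdx i) = if i.val % 2 = 0 then 1 else -1 := by
  rcases i with ⟨i, hi⟩
  simp only [sK, pIdx, Matrix.of_apply]
  split_ifs <;> first | omega | rfl

lemma sB_nondegenerate (F : Type) [Field F] (ν : ℕ) : (sB F ν).Nondegenerate := by
  refine ((sB_alt F ν).isRefl.nondegenerate_iff_separatingLeft).mpr ?_
  intro m hm
  funext i
  have h := hm (Pi.single (pIdx i) 1)
  rw [sB_apply, Matrix.mulVec_single] at h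
  have hsum : (m ⬝ᵥ fun i' => sK F ν i' (pIdx i) * 1) = m i * (sK F ν i (pIdx i) * 1) := by
    apply Finset.sum_eq_single_of_mem i (Finset.mem_univ i)
    intro b _ hb
    simp only [sK_pIdx_ne F ν i b hb, zero_mul, mul_zero]
  change (m ⬝ᵥ fun i' => sK F ν i' (pIdx i) * 1) = 0 at h
  rw [hsum] at h
  have hK : sK F ν i (pIdx i) ≠ 0 := by
    rw [sK_pIdx_self]; split
    · exact one_ne_zero
    · exact neg_ne_zero.mpr one_ne_zero
  show m i = 0
  rcases mul_eq_zero.mp h with h' | h'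
  · exact h'
  · exact absurd (by rw [mul_one] at h'; exact h') hK

/-- The symplectic graph `Sp(2ν, q)`: vertices are the one-dimensional subspaces
of `F^(2ν)`, with `[α]` adjacent to `[β]` iff `α K βᵀ ≠ 0`. -/
def SpG (F : Type) [Field F] (ν : ℕ) :
    SimpleGraph (Projectivization F (Fin (2 * ν) → F)) :=
  SimpleGraph.fromRel fun x y => x.rep ⬝ᵥ ((sK F ν) *ᵥ y.rep) ≠ 0

theorem SpG_independent_set_card_le (q ν : ℕ) (F : Type) [Field F] [Fintype F]
    (hF : Fintype.card F = q) (hν : 1 ≤ ν)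
    (S : Set (Projectivization F (Fin (2 * ν) → F)))
    (hS : ∀ x ∈ S, ∀ y ∈ S, ¬ (SpG F ν).Adj x y) :
    S.ncard ≤ (q ^ ν - 1) / (q - 1) := by
  classical
  set V := Fin (2 * ν) → F
  set W : Submodule F V := Submodule.span F (Projectivization.rep '' S) with hW
  -- orthogonality on generators
  have hgen : ∀ a ∈ Projectivization.rep '' S, ∀ b ∈ Projectivization.rep '' S,
      sB F ν a b = 0 := by
    rintro a ⟨x, hx, rfl⟩ b ⟨y, hy, rfl⟩
    by_cases hxy : x = y
    · subst hxy; exact sB_alt F ν _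
    · have h := hS x hx y hy
      rw [SpG, SimpleGraph.fromRel_adj] at h
      push_neg at h
      rw [sB_apply]
      exact (h (fun hc => hxy hc)).1
  -- total isotropy of W
  have htot : ∀ u ∈ W, ∀ w ∈ W, sB F ν u w = 0 := by
    intro u hu w hw
    refine Submodule.span_induction₂ (p := fun u w _ _ => sB F ν u w = 0)
      (fun a b ha hb => hgen a ha b hb) ?_ ?_ ?_ ?_ ?_ ?_ hu hw
    · intro y _; simp
    · intro x _; simp
    · intro x y z _ _ _ h1 h2; simp [LinearMap.add_apply, map_add, h1, h2]
    · intro x y z _ _ _ h1 h2; simp [map_add, h1, h2]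
    · intro r x y _ _ h1; simp [h1]
    · intro r x y _ _ h1; simp [h1]
  have hrefl : (sB F ν).IsRefl := (sB_alt F ν).isRefl
  -- dimension bound
  have hle : W ≤ (sB F ν).orthogonal W := by
    intro v hv
    rw [LinearMap.BilinForm.mem_orthogonal_iff]
    intro n hn
    exact htot n hn v hv
  have hdim : Module.finrank F W ≤ ν := by
    have h1 : Module.finrank F ((sB F ν).orthogonal W) =
        Module.finrank F V - Module.finrank F W :=
      LinearMap.BilinForm.finrank_orthogonal (sB_nondegenerate F ν) W
    have h2 : Module.finrank F W ≤ Module.finrank F ((sB F ν).orthogonal W) :=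
      Submodule.finrank_mono hle
    have h3 : Module.finrank F V = 2 * ν := Module.finrank_fin_fun F
    have h4 : Module.finrank F W ≤ Module.finrank F V := Submodule.finrank_le W
    omega
  -- counting
  letI : Fintype ↥W := Fintype.ofFinite _
  have hcardW : Fintype.card ↥W = q ^ Module.finrank F W := by
    rw [← hF]; exact Module.card_eq_pow_finrank
  have hSfin : Finite ↥S := by
    refine Finite.of_injective (fun x => (x : Projectivization F V).rep) ?_
    intro x y hxy
    ext1
    rw [← (x : Projectivization F V).mk_rep, ← (y : Projectivization F V).mk_rep]
    simp only [hxy]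
  letI : Fintype ↥S := Fintype.ofFinite _
  -- injection from S × Fˣ into nonzero elements of W
  let e : ↥S × Fˣ → {w : ↥W // w ≠ 0} := fun p =>
    ⟨⟨(p.2 : F) • (p.1 : Projectivization F V).rep,
      W.smul_mem _ (Submodule.subset_span ⟨p.1, p.1.2, rfl⟩)⟩,
      by
        intro hc
        rw [Submodule.mk_eq_zero] at hc
        exact (p.1 : Projectivization F V).rep_nonzero
          (by simpa [smul_eq_zero, p.2.ne_zero] using hc)⟩
  have he : Function.Injective e := by
    rintro ⟨⟨x, hx⟩, c⟩ ⟨⟨y, hy⟩, c'⟩ h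
    simp only [e, Subtype.mk.injEq, Submodule.mk_eq_zero] at h
    have hxy : x = y := by
      have hcc : ((c⁻¹ * c' : Fˣ) : F) • y.rep = x.rep := by
        rw [Units.val_mul, mul_smul, ← h, smul_smul]
        simp
      rw [← x.mk_rep, ← y.mk_rep]
      exact (Projectivization.mk_eq_mk_iff F _ _ x.rep_nonzero y.rep_nonzero).mpr
        ⟨c⁻¹ * c', by rw [Units.smul_def]; exact hcc⟩
    subst hxy
    have hc : (c : F) = (c' : F) := by
      have h' : ((c : F) - (c' : F)) • x.rep = 0 := by
        rw [sub_smul, h, sub_self]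
      rcases smul_eq_zero.mp h' with h'' | h''
      · exact sub_eq_zero.mp h''
      · exact absurd h'' x.rep_nonzero
    simp [Prod.ext_iff, Subtype.ext_iff, Units.ext_iff, hc]
  have hcard := Fintype.card_le_of_injective e he
  have hne : Fintype.card {w : ↥W // w ≠ 0} = q ^ Module.finrank F W - 1 := by
    rw [Fintype.card_subtype_compl, Fintype.card_subtype_eq, hcardW]
  have hq2 : 2 ≤ q := hF ▸ Fintype.one_lt_card
  have hcardS : Fintype.card (↥S × Fˣ) = S.ncard * (q - 1) := by
    rw [Fintype.card_prod, Fintype.card_units, hF, Set.ncard_eq_toFinset_card',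
      Set.toFinset_card]
  have hmul : S.ncard * (q - 1) ≤ q ^ ν - 1 := by
    rw [← hcardS]
    refine le_trans (hne ▸ hcard) ?_
    have : q ^ Module.finrank F W ≤ q ^ ν := Nat.pow_le_pow_right (by omega) hdim
    omega
  rw [Nat.le_div_iff_mul_le (by omega)]
  exact hmul
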